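/- (Upward stratification theorem) Let ⁺ be the veristratifier, i.e. the stratifier given by X = {ω·1, ω·2, ω·3, …}. For any L_EA-theory T, any L_EA-formula φ, and any assignment s into ℕ, 𝒩_T ⊨ φ[s] if and only if 𝓜_{T^⊕} ⊨ φ⁺[s]. -/

import Mathlib

namespace FCT

/-- Terms of the language `L_PA = (0, S, +, ·)`.  Variables are indexed by `ℕ`. -/
inductive Term : Type where
  | var : ℕ → Term
  | zero : Term
  | succ : Term → Term
  | add : Term → Term → Term
  | mul : Term → Term → Term

/-- Formulas of `L_PA` extended by a family of unary operators indexed by `Op`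
(the base logic).  `op K φ` is the formula `Kφ`. -/
inductive Formula (Op : Type) : Type where
  | eq : Term → Term → Formula Op
  | imp : Formula Op → Formula Op → Formula Op
  | not : Formula Op → Formula Op
  | all : ℕ → Formula Op → Formula Op
  | op : Op → Formula Op → Formula Op

/-- The ordinals below `ω·ω`, encoded as pairs: `(a, b)` represents `ω·a + b`,
with the lexicographic order. -/
abbrev Ord2 : Type := ℕ ×ₗ ℕ

/-- The ordinal `ω·a + b` as an element of `Ord2`. -/
def omul (a b : ℕ) : Ord2 := toLex (a, b)

/-- Formulas of `L_EA`: one operator `K`. -/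
abbrev LEA : Type := Formula Unit

/-- Formulas of `L_{ω·ω}`: operators `K^α` for `α < ω·ω`. -/
abbrev LOO : Type := Formula Ord2

/-- `Kφ` in `L_EA`. -/
def KK (φ : LEA) : LEA := .op () φ

/-- Variables occurring in a term. -/
def Term.vars : Term → Set ℕ
  | .var x => {x}
  | .zero => ∅
  | .succ t => t.vars
  | .add t u => t.vars ∪ u.vars
  | .mul t u => t.vars ∪ u.vars

/-- Free variables of a formula (`FV(Kφ) = FV(φ)`). -/
def Formula.free {Op : Type} : Formula Op → Set ℕ
  | .eq t u => t.vars ∪ u.vars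
  | .imp φ ψ => φ.free ∪ ψ.free
  | .not φ => φ.free
  | .all x φ => φ.free \ {x}
  | .op _ φ => φ.free

/-- A sentence is a formula with no free variables. -/
def Formula.IsSentence {Op : Type} (φ : Formula Op) : Prop := φ.free = ∅

/-- A theory is a set of sentences. -/
def IsTheory {Op : Type} (T : Set (Formula Op)) : Prop := ∀ φ ∈ T, φ.IsSentence

/-- Substitution of the term `u` for the variable `x` in a term. -/
def Term.subst (x : ℕ) (u : Term) : Term → Term
  | .var y => if y = x then u else .var y
  | .zero => .zero
  | .succ t => .succ (Term.subst x u t)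
  | .add t₁ t₂ => .add (Term.subst x u t₁) (Term.subst x u t₂)
  | .mul t₁ t₂ => .mul (Term.subst x u t₁) (Term.subst x u t₂)

/-- Substitution `φ(x|u)` of the term `u` for all free occurrences of `x` in `φ`. -/
def Formula.subst {Op : Type} (x : ℕ) (u : Term) : Formula Op → Formula Op
  | .eq t₁ t₂ => .eq (Term.subst x u t₁) (Term.subst x u t₂)
  | .imp φ ψ => .imp (Formula.subst x u φ) (Formula.subst x u ψ)
  | .not φ => .not (Formula.subst x u φ)
  | .all y φ => if y = x then .all y φ else .all y (Formula.subst x u φ)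
  | .op K φ => .op K (Formula.subst x u φ)

/-- The term `u` is substitutable for the variable `x` in the formula. -/
def Formula.Substitutable {Op : Type} (x : ℕ) (u : Term) : Formula Op → Prop
  | .eq _ _ => True
  | .imp φ ψ => φ.Substitutable x u ∧ ψ.Substitutable x u
  | .not φ => φ.Substitutable x u
  | .all y φ => x = y ∨ x ∉ φ.free ∨ (y ∉ u.vars ∧ φ.Substitutable x u)
  | .op _ φ => φ.Substitutable x u

/-- Matching of two variables relative to a list of pairs of renamed bound variables. -/
def varMatch : List (ℕ × ℕ) → ℕ → ℕ → Prop
  | [], x, y => x = y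
  | (a, b) :: ρ, x, y => (x = a ∧ y = b) ∨ (x ≠ a ∧ y ≠ b ∧ varMatch ρ x y)

/-- Alphabetic matching of terms relative to a list of pairs of renamed bound variables. -/
def Term.alpha (ρ : List (ℕ × ℕ)) : Term → Term → Prop
  | .var x, .var y => varMatch ρ x y
  | .zero, .zero => True
  | .succ t, .succ u => t.alpha ρ u
  | .add t₁ t₂, .add u₁ u₂ => t₁.alpha ρ u₁ ∧ t₂.alpha ρ u₂
  | .mul t₁ t₂, .mul u₁ u₂ => t₁.alpha ρ u₁ ∧ t₂.alpha ρ u₂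
  | _, _ => False

/-- Alphabetic matching of formulas relative to a list of pairs of renamed bound variables. -/
def Formula.alpha {Op : Type} (ρ : List (ℕ × ℕ)) : Formula Op → Formula Op → Prop
  | .eq t₁ t₂, .eq u₁ u₂ => t₁.alpha ρ u₁ ∧ t₂.alpha ρ u₂
  | .imp φ₁ φ₂, .imp ψ₁ ψ₂ => φ₁.alpha ρ ψ₁ ∧ φ₂.alpha ρ ψ₂
  | .not φ, .not ψ => φ.alpha ρ ψ
  | .all x φ, .all y ψ => φ.alpha ((x, y) :: ρ) ψ
  | .op K φ, .op K' ψ => K = K' ∧ φ.alpha ρ ψ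
  | _, _ => False

/-- `ψ` is an alphabetic variant of `φ`: it is obtained from `φ` by renaming
bound variables while respecting the binding of the quantifiers. -/
def Formula.AlphaVariant {Op : Type} (φ ψ : Formula Op) : Prop := φ.alpha [] ψ

/-- The data of a structure for the base logic over `L_PA` extended by the
operators `Op`: a first-order part together with a truth valuation
`opSat K φ s` ("`M ⊨ Kφ[s]`") for operator-prefixed formulas. -/
structure PreStruc (Op : Type) : Type 1 where
  U : Type
  zero : U
  succ : U → U
  add : U → U → U
  mul : U → U → U
  opSat : Op → Formula Op → (ℕ → U) → Prop

/-- Evaluation of terms. -/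
def Term.eval {Op : Type} (M : PreStruc Op) (s : ℕ → M.U) : Term → M.U
  | .var x => s x
  | .zero => M.zero
  | .succ t => M.succ (t.eval M s)
  | .add t u => M.add (t.eval M s) (u.eval M s)
  | .mul t u => M.mul (t.eval M s) (u.eval M s)

/-- Satisfaction `M ⊨ φ[s]`: as in first-order logic on non-operator formulas,
and given by `opSat` on operator-prefixed formulas. -/
def Sat {Op : Type} (M : PreStruc Op) : Formula Op → (ℕ → M.U) → Prop
  | .eq t u, s => t.eval M s = u.eval M s
  | .imp φ ψ, s => Sat M φ s → Sat M ψ s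
  | .not φ, s => ¬ Sat M φ s
  | .all x φ, s => ∀ a : M.U, Sat M φ (Function.update s x a)
  | .op K φ, s => M.opSat K φ s

/-- `M` is a genuine structure of the base logic: its operator valuation
(1) depends only on the values of the assignment on the free variables,
(2) is invariant under renaming of bound variables, and
(3) satisfies weak substitution. -/
def IsStruc {Op : Type} (M : PreStruc Op) : Prop :=
  (∀ (K : Op) (φ : Formula Op) (s t : ℕ → M.U),
      (∀ x ∈ φ.free, s x = t x) → (M.opSat K φ s ↔ M.opSat K φ t)) ∧
  (∀ (K : Op) (φ ψ : Formula Op) (s : ℕ → M.U),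
      φ.AlphaVariant ψ → (M.opSat K φ s ↔ M.opSat K ψ s)) ∧
  (∀ (K : Op) (φ : Formula Op) (x y : ℕ) (s : ℕ → M.U),
      φ.Substitutable x (.var y) →
      (M.opSat K (φ.subst x (.var y)) s ↔ M.opSat K φ (Function.update s x (s y))))

/-- A formula is valid if it holds in every structure under every assignment. -/
def Valid {Op : Type} (φ : Formula Op) : Prop :=
  ∀ M : PreStruc Op, IsStruc M → ∀ s : ℕ → M.U, Sat M φ s

/-- `T ⊨ φ`: every structure satisfying all members of `T` (under every
assignment) satisfies `φ` under every assignment. -/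
def Models {Op : Type} (T : Set (Formula Op)) (φ : Formula Op) : Prop :=
  ∀ M : PreStruc Op, IsStruc M → (∀ ψ ∈ T, ∀ s : ℕ → M.U, Sat M ψ s) →
    ∀ s : ℕ → M.U, Sat M φ s

/-- `M ⊨ T`. -/
def SatTheory {Op : Type} (M : PreStruc Op) (T : Set (Formula Op)) : Prop :=
  ∀ φ ∈ T, ∀ s : ℕ → M.U, Sat M φ s

/-- The numeral `n̄`. -/
def numeral : ℕ → Term
  | 0 => .zero
  | n + 1 => .succ (numeral n)

/-- Helper for `φ^s`: replace every free occurrence of a variable `x` not in the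
list `B` of bound variables by the numeral for `s x`. -/
def Term.numSub (s : ℕ → ℕ) (B : List ℕ) : Term → Term
  | .var x => if x ∈ B then .var x else numeral (s x)
  | .zero => .zero
  | .succ t => .succ (t.numSub s B)
  | .add t u => .add (t.numSub s B) (u.numSub s B)
  | .mul t u => .mul (t.numSub s B) (u.numSub s B)

/-- Helper for `φ^s` (carrying the list of bound variables). -/
def Formula.numSub {Op : Type} (s : ℕ → ℕ) : List ℕ → Formula Op → Formula Op
  | B, .eq t u => .eq (t.numSub s B) (u.numSub s B)
  | B, .imp φ ψ => .imp (φ.numSub s B) (ψ.numSub s B)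
  | B, .not φ => .not (φ.numSub s B)
  | B, .all x φ => .all x (φ.numSub s (x :: B))
  | B, .op K φ => .op K (φ.numSub s B)

/-- `φ^s`: the sentence obtained by substituting the numeral for `s x` for each
free occurrence of each variable `x` in `φ`. -/
def assignSub {Op : Type} (s : ℕ → ℕ) (φ : Formula Op) : Formula Op :=
  φ.numSub s []

/-- The intended structure `𝒩_T` of an `L_EA`-theory `T`: standard first-order
part and `𝒩_T ⊨ Kφ[s]` iff `T ⊨ φ^s`. -/
def NStruc (T : Set LEA) : PreStruc Unit where
  U := ℕ
  zero := 0
  succ := Nat.succ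
  add := (· + ·)
  mul := (· * ·)
  opSat := fun _ φ s => Models T (assignSub s φ)

/-- `T` is true: `𝒩_T ⊨ T`. -/
def TheoryTrue (T : Set LEA) : Prop := SatTheory (NStruc T) T

/-- `On(φ)`: the set of `α < ω·ω` such that `K^α` occurs in `φ`. -/
def Formula.On : LOO → Set Ord2
  | .eq _ _ => ∅
  | .imp φ ψ => φ.On ∪ ψ.On
  | .not φ => φ.On
  | .all _ φ => φ.On
  | .op α φ => insert α φ.On

/-- `T ∩ α`: the members of `T` all of whose superscripts are `< α`. -/
def cut (T : Set LOO) (α : Ord2) : Set LOO := {φ | φ ∈ T ∧ ∀ β ∈ φ.On, β < α}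

/-- The intended structure `𝓜_T` of an `L_{ω·ω}`-theory `T`: standard
first-order part and `𝓜_T ⊨ K^αφ[s]` iff `T∩α ⊨ φ^s`. -/
def MStruc (T : Set LOO) : PreStruc Ord2 where
  U := ℕ
  zero := 0
  succ := Nat.succ
  add := (· + ·)
  mul := (· * ·)
  opSat := fun α φ s => Models (cut T α) (assignSub s φ)

/-- The least element of a set `A ⊆ ω·ω` (junk value if `A` is empty):
first minimize the `ω`-coefficient, then the finite part. -/
noncomputable def leastIn (A : Set Ord2) : Ord2 :=
  let a := sInf {a : ℕ | ∃ b : ℕ, toLex (a, b) ∈ A}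
  toLex (a, sInf {b : ℕ | toLex (a, b) ∈ A})

/-- The stratifier given by `X ⊆ ω·ω`: fixes atomic formulas, commutes with
`→`, `¬`, `∀`, and sends `Kφ₀` to `K^α φ₀⁺` where `α` is the least element of
`X \ On(φ₀⁺)`. -/
noncomputable def stratify (X : Set Ord2) : LEA → LOO
  | .eq t u => .eq t u
  | .imp φ ψ => .imp (stratify X φ) (stratify X ψ)
  | .not φ => .not (stratify X φ)
  | .all x φ => .all x (stratify X φ)
  | .op _ φ => .op (leastIn (X \ (stratify X φ).On)) (stratify X φ)

/-- A stratifier is the map given by some infinite `X ⊆ ω·ω`. -/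
def IsStratifier (f : LEA → LOO) : Prop :=
  ∃ X : Set Ord2, X.Infinite ∧ f = stratify X

/-- `T^⊕ = { φ⁺ : φ ∈ T, ⁺ a stratifier }`. -/
def oplus (T : Set LEA) : Set LOO :=
  {ψ | ∃ φ ∈ T, ∃ f : LEA → LOO, IsStratifier f ∧ ψ = f φ}

/-- The veristratifier: the stratifier given by `X = {ω·1, ω·2, ω·3, …}`. -/
noncomputable def veristratifier : LEA → LOO :=
  stratify {α : Ord2 | ∃ n : ℕ, α = omul (n + 1) 0}

/-- `φ⁻`: change every `K^α` into `K`. -/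
def Formula.down : LOO → LEA
  | .eq t u => .eq t u
  | .imp φ ψ => .imp φ.down ψ.down
  | .not φ => .not φ.down
  | .all x φ => .all x φ.down
  | .op _ φ => .op () φ.down

/-- `M⁺` for an `L_{ω·ω}`-structure `M` and a stratifier `⁺`: same universe and
`L_PA`-part, and `M⁺ ⊨ Kφ[s]` iff `M ⊨ (Kφ)⁺[s]`. -/
def upStruc (M : PreStruc Ord2) (f : LEA → LOO) : PreStruc Unit where
  U := M.U
  zero := M.zero
  succ := M.succ
  add := M.add
  mul := M.mul
  opSat := fun _ φ s => Sat M (f (.op () φ)) s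

/-- `M⁻` for an `L_EA`-structure `M`: same universe and `L_PA`-part, and
`M⁻ ⊨ K^αφ[s]` iff `M ⊨ K(φ⁻)[s]`. -/
def downStruc (M : PreStruc Unit) : PreStruc Ord2 where
  U := M.U
  zero := M.zero
  succ := M.succ
  add := M.add
  mul := M.mul
  opSat := fun _ φ s => Sat M (.op () φ.down) s

open Classical in
/-- `h(φ)`: replace every occurrence of `K^α` with `α ∈ X` by `K^{h(α)}`. -/
noncomputable def mapOps (X : Set Ord2) (h : Ord2 → Ord2) : LOO → LOO
  | .eq t u => .eq t u
  | .imp φ ψ => .imp (mapOps X h φ) (mapOps X h ψ)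
  | .not φ => .not (mapOps X h φ)
  | .all x φ => .all x (mapOps X h φ)
  | .op α φ => .op (if α ∈ X then h α else α) (mapOps X h φ)

/-- `h : X → ω·ω` is order preserving. -/
def OrdPresOn (X : Set Ord2) (h : Ord2 → Ord2) : Prop :=
  ∀ a ∈ X, ∀ b ∈ X, a < b → h a < h b

/-- A uniform `L_{ω·ω}`-theory. -/
def Uniform (T : Set LOO) : Prop :=
  ∀ (X : Set Ord2) (h : Ord2 → Ord2), OrdPresOn X h →
    ∀ φ ∈ T, φ.On ⊆ X → mapOps X h φ ∈ T

/-- `h(M)`: same universe and `L_PA`-part as `M`, and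
`h(M) ⊨ K^αφ[s]` iff `M ⊨ h(K^αφ)[s]`. -/
noncomputable def hStruc (X : Set Ord2) (h : Ord2 → Ord2) (M : PreStruc Ord2) :
    PreStruc Ord2 where
  U := M.U
  zero := M.zero
  succ := M.succ
  add := M.add
  mul := M.mul
  opSat := fun α φ s => Sat M (mapOps X h (.op α φ)) s

/-- The depth of nesting of the operators. -/
def Formula.depth {Op : Type} : Formula Op → ℕ
  | .eq _ _ => 0
  | .imp φ ψ => max φ.depth ψ.depth
  | .not φ => φ.depth
  | .all _ φ => φ.depth
  | .op _ φ => φ.depth + 1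

/-- `∀x₁ ⋯ ∀xₙ φ`. -/
def Formula.alls {Op : Type} : List ℕ → Formula Op → Formula Op
  | [], φ => φ
  | x :: l, φ => .all x (Formula.alls l φ)

/-- `ψ` is a universal closure of `φ`: a sentence of the form `∀x₁ ⋯ ∀xₙ φ`. -/
def IsUClosure {Op : Type} (φ ψ : Formula Op) : Prop :=
  ψ.IsSentence ∧ ∃ l : List ℕ, ψ = Formula.alls l φ

/-- The schema `E₁`: universal closures of `Kφ`, `φ` valid. -/
def E1 : Set LEA := {χ | ∃ φ : LEA, Valid φ ∧ IsUClosure (KK φ) χ}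

/-- The schema `E₂`: universal closures of `K(φ→ψ) → Kφ → Kψ`. -/
def E2 : Set LEA :=
  {χ | ∃ φ ψ : LEA, IsUClosure (.imp (KK (.imp φ ψ)) (.imp (KK φ) (KK ψ))) χ}

/-- The schema `E′₂`: universal closures of `K(φ→ψ) → Kφ → Kψ` with
`depth(φ) ≤ depth(ψ)`. -/
def E2' : Set LEA :=
  {χ | ∃ φ ψ : LEA, φ.depth ≤ ψ.depth ∧
    IsUClosure (.imp (KK (.imp φ ψ)) (.imp (KK φ) (KK ψ))) χ}

/-- The schema `E₃`: universal closures of `Kφ → φ`. -/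
def E3 : Set LEA := {χ | ∃ φ : LEA, IsUClosure (.imp (KK φ) φ) χ}

/-- The Assigned Validity schema: all `φ^s` with `φ` valid, `s : ℕ → ℕ`. -/
def AssignedValidity : Set LEA :=
  {χ | ∃ (φ : LEA) (s : ℕ → ℕ), Valid φ ∧ χ = assignSub s φ}

/-- `K(T₀) = { Kφ : φ ∈ T₀ }`. -/
def KSet (T : Set LEA) : Set LEA := {χ | ∃ φ ∈ T, χ = KK φ}

/-- Membership in the smallest `K`-closed set containing `S`. -/
inductive KClosureMem (S : Set LEA) : LEA → Prop
  | base {φ : LEA} : φ ∈ S → KClosureMem S φ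
  | k {φ : LEA} : KClosureMem S φ → KClosureMem S (KK φ)

/-- The smallest `K`-closed theory containing `S`. -/
def KClosure (S : Set LEA) : Set LEA := {φ | KClosureMem S φ}

/-- `T₀` is upgeneric: `𝓜_{T^⊕} ⊨ T₀^⊕` for every `L_EA`-theory `T ⊇ T₀`. -/
def Upgeneric (T₀ : Set LEA) : Prop :=
  ∀ T : Set LEA, IsTheory T → T₀ ⊆ T → SatTheory (MStruc (oplus T)) (oplus T₀)

/-- A concrete Gödel numbering of terms. -/
def encodeTerm : Term → ℕ
  | .var x => Nat.pair 0 x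
  | .zero => Nat.pair 1 0
  | .succ t => Nat.pair 2 (encodeTerm t)
  | .add t u => Nat.pair 3 (Nat.pair (encodeTerm t) (encodeTerm u))
  | .mul t u => Nat.pair 4 (Nat.pair (encodeTerm t) (encodeTerm u))

/-- A concrete Gödel numbering of `L_EA`-formulas. -/
def encodeLEA : LEA → ℕ
  | .eq t u => Nat.pair 0 (Nat.pair (encodeTerm t) (encodeTerm u))
  | .imp φ ψ => Nat.pair 1 (Nat.pair (encodeLEA φ) (encodeLEA ψ))
  | .not φ => Nat.pair 2 (encodeLEA φ)
  | .all x φ => Nat.pair 3 (Nat.pair x (encodeLEA φ))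
  | .op _ φ => Nat.pair 4 (encodeLEA φ)

/-- `T` is recursively enumerable: the set of Gödel numbers of its members is r.e. -/
def RETheory (T : Set LEA) : Prop := REPred fun n => ∃ φ ∈ T, encodeLEA φ = n

/-- `T₀` is r.e.-upgeneric: `T₀` is r.e. and `𝓜_{T^⊕} ⊨ T₀^⊕` for every r.e.
`L_EA`-theory `T ⊇ T₀`. -/
def REUpgeneric (T₀ : Set LEA) : Prop :=
  RETheory T₀ ∧
    ∀ T : Set LEA, IsTheory T → RETheory T → T₀ ⊆ T →
      SatTheory (MStruc (oplus T)) (oplus T₀)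

section Aux

/-! ### Order / sInf helpers -/

theorem sInf_eq_of {A : Set ℕ} {k : ℕ} (hk : k ∈ A) (h : ∀ m ∈ A, k ≤ m) : sInf A = k :=
  le_antisymm (Nat.sInf_le hk) (le_csInf ⟨k, hk⟩ h)

theorem leastIn_mem {A : Set Ord2} (h : A.Nonempty) : leastIn A ∈ A := by
  obtain ⟨x, hx⟩ := h
  have h1 : {a : ℕ | ∃ b : ℕ, toLex (a, b) ∈ A}.Nonempty := ⟨(ofLex x).1, (ofLex x).2, hx⟩
  obtain ⟨b, hb⟩ := Nat.sInf_mem h1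
  exact Nat.sInf_mem
    (⟨b, hb⟩ : Set.Nonempty {b : ℕ | toLex (sInf {a : ℕ | ∃ b : ℕ, toLex (a, b) ∈ A}, b) ∈ A})

theorem leastIn_eq {A : Set Ord2} {p q : ℕ} (hmem : toLex (p, q) ∈ A)
    (hp : ∀ a b : ℕ, toLex (a, b) ∈ A → p ≤ a)
    (hq : ∀ b : ℕ, toLex (p, b) ∈ A → q ≤ b) : leastIn A = toLex (p, q) := by
  have h0 : leastIn A = toLex (sInf {a : ℕ | ∃ b : ℕ, toLex (a, b) ∈ A},
      sInf {b : ℕ | toLex (sInf {a : ℕ | ∃ b : ℕ, toLex (a, b) ∈ A}, b) ∈ A}) := rfl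
  have h1 : sInf {a : ℕ | ∃ b : ℕ, toLex (a, b) ∈ A} = p :=
    sInf_eq_of ⟨q, hmem⟩ (by rintro m ⟨b, hb⟩; exact hp m b hb)
  rw [h0, h1, show sInf {b : ℕ | toLex (p, b) ∈ A} = q from sInf_eq_of hmem hq]

theorem omul_inj {a b c d : ℕ} : omul a b = omul c d ↔ a = c ∧ b = d := by
  constructor
  · intro h
    have := toLex.injective h
    simpa [Prod.ext_iff] using this
  · rintro ⟨rfl, rfl⟩; rfl

/-! ### The veristratifier's ordinal sets -/

def VX : Set Ord2 := {α : Ord2 | ∃ n : ℕ, α = omul (n + 1) 0}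

def Seg (d : ℕ) : Set Ord2 := {β | ∃ j : ℕ, 1 ≤ j ∧ j ≤ d ∧ β = omul j 0}

def Seg' (d : ℕ) : Set Ord2 := Seg d ∪ {β | ∃ j : ℕ, 1 ≤ j ∧ β = toLex (d, j)}

theorem verist_def : veristratifier = stratify VX := rfl

theorem Seg_zero : Seg 0 = ∅ := by
  ext β
  simp only [Seg, Set.mem_setOf_eq, Set.mem_empty_iff_false, iff_false]
  rintro ⟨j, h1, h2, _⟩; omega

theorem Seg_union (d₁ d₂ : ℕ) : Seg d₁ ∪ Seg d₂ = Seg (max d₁ d₂) := by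
  ext β
  simp only [Seg, Set.mem_union, Set.mem_setOf_eq]
  constructor
  · rintro (⟨j, h1, h2, h3⟩ | ⟨j, h1, h2, h3⟩)
    · exact ⟨j, h1, by omega, h3⟩
    · exact ⟨j, h1, by omega, h3⟩
  · rintro ⟨j, h1, h2, h3⟩
    rcases le_or_gt j d₁ with h | h
    · exact Or.inl ⟨j, h1, h, h3⟩
    · exact Or.inr ⟨j, h1, by omega, h3⟩

theorem Seg_succ (e : ℕ) : insert (omul (e + 1) 0) (Seg e) = Seg (e + 1) := by
  ext β
  simp only [Set.mem_insert_iff, Seg, Set.mem_setOf_eq]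
  constructor
  · rintro (rfl | ⟨j, h1, h2, h3⟩)
    · exact ⟨e + 1, by omega, le_rfl, rfl⟩
    · exact ⟨j, h1, by omega, h3⟩
  · rintro ⟨j, h1, h2, h3⟩
    rcases eq_or_lt_of_le h2 with h | h
    · exact Or.inl (by rw [h3, h])
    · exact Or.inr ⟨j, h1, by omega, h3⟩

theorem leastIn_VX (e : ℕ) : leastIn (VX \ Seg e) = omul (e + 1) 0 := by
  apply leastIn_eq
  · refine ⟨⟨e, rfl⟩, ?_⟩
    rintro ⟨j, hj1, hj2, hj3⟩
    obtain ⟨h1, h2⟩ := omul_inj.1 hj3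
    omega
  · rintro a b ⟨⟨n, hn⟩, hout⟩
    have hn' : omul a b = omul (n + 1) 0 := hn
    obtain ⟨h1, h2⟩ := omul_inj.1 hn'
    by_contra hc
    push_neg at hc
    refine hout ⟨a, by omega, by omega, ?_⟩
    show omul a b = omul a 0
    rw [h2]
  · intro b _; exact Nat.zero_le b

theorem leastIn_Seg' {d e : ℕ} (he : e < d) : leastIn (Seg' d \ Seg e) = omul (e + 1) 0 := by
  apply leastIn_eq
  · refine ⟨Or.inl ⟨e + 1, by omega, by omega, rfl⟩, ?_⟩
    rintro ⟨j, hj1, hj2, hj3⟩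
    obtain ⟨h1, h2⟩ := omul_inj.1 hj3
    omega
  · rintro a b ⟨hmem, hout⟩
    rcases hmem with ⟨j, hj1, hj2, hj⟩ | ⟨j, hj1, hj⟩
    · have hj' : omul a b = omul j 0 := hj
      obtain ⟨h1, h2⟩ := omul_inj.1 hj'
      by_contra hc
      push_neg at hc
      exact hout ⟨j, hj1, by omega, hj⟩
    · have hj' : omul a b = omul d j := hj
      obtain ⟨h1, h2⟩ := omul_inj.1 hj'
      omega
  · intro b _; exact Nat.zero_le b

theorem Seg'_infinite (d : ℕ) : (Seg' d).Infinite := by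
  apply Set.infinite_of_injective_forall_mem (f := fun j : ℕ => toLex (d, j + 1))
  case hi =>
    intro a b h
    have := toLex.injective h
    simpa [Prod.ext_iff] using this
  case hf =>
    intro j
    exact Or.inr ⟨j + 1, by omega, rfl⟩

theorem Seg'_lt (d : ℕ) : ∀ β ∈ Seg' d, β < omul (d + 1) 0 := by
  rintro β (⟨j, h1, h2, rfl⟩ | ⟨j, h1, rfl⟩)
  · exact Prod.Lex.lt_iff.2 (Or.inl (show j < d + 1 by omega))
  · exact Prod.Lex.lt_iff.2 (Or.inl (show d < d + 1 by omega))

end Aux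
section Syn

theorem down_stratify (X : Set Ord2) : ∀ φ : LEA, (stratify X φ).down = φ := by
  intro φ
  induction φ with
  | eq t u => rfl
  | imp φ ψ ih1 ih2 => simp [stratify, Formula.down, ih1, ih2]
  | not φ ih => simp [stratify, Formula.down, ih]
  | all x φ ih => simp [stratify, Formula.down, ih]
  | op K φ ih => cases K; simp [stratify, Formula.down, ih]

theorem free_stratify (X : Set Ord2) : ∀ φ : LEA, (stratify X φ).free = φ.free := by
  intro φ
  induction φ <;> simp [stratify, Formula.free, *]

theorem free_down : ∀ χ : LOO, χ.down.free = χ.free := by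
  intro χ
  induction χ <;> simp [Formula.down, Formula.free, *]

theorem On_finite : ∀ χ : LOO, χ.On.Finite := by
  intro χ
  induction χ with
  | eq t u => simp only [Formula.On]; exact Set.finite_empty
  | imp φ ψ ih1 ih2 => simp only [Formula.On]; exact ih1.union ih2
  | not φ ih => exact ih
  | all x φ ih => exact ih
  | op α φ ih => simp only [Formula.On]; exact ih.insert α

theorem On_stratify_subset (X : Set Ord2) (hX : X.Infinite) :
    ∀ φ : LEA, (stratify X φ).On ⊆ X := by
  intro φ
  induction φ with
  | eq t u => simp [stratify, Formula.On]
  | imp φ ψ ih1 ih2 => simp only [stratify, Formula.On]; exact Set.union_subset ih1 ih2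
  | not φ ih => exact ih
  | all x φ ih => exact ih
  | op K φ ih =>
    simp only [stratify, Formula.On]
    refine Set.insert_subset ?_ ih
    exact (leastIn_mem (hX.diff (On_finite _)).nonempty).1

theorem On_subst (x : ℕ) (u : Term) : ∀ χ : LOO, (χ.subst x u).On = χ.On := by
  intro χ
  induction χ with
  | eq t v => simp [Formula.subst, Formula.On]
  | imp φ ψ ih1 ih2 => simp [Formula.subst, Formula.On, ih1, ih2]
  | not φ ih => simp [Formula.subst, Formula.On, ih]
  | all y φ ih =>
    by_cases h : y = x <;> simp [Formula.subst, h, Formula.On, ih]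
  | op α φ ih => simp [Formula.subst, Formula.On, ih]

theorem stratify_subst (X : Set Ord2) (x : ℕ) (u : Term) :
    ∀ φ : LEA, stratify X (φ.subst x u) = (stratify X φ).subst x u := by
  intro φ
  induction φ with
  | eq t v => rfl
  | imp φ ψ ih1 ih2 => simp [Formula.subst, stratify, ih1, ih2]
  | not φ ih => simp [Formula.subst, stratify, ih]
  | all y φ ih =>
    by_cases h : y = x <;> simp [Formula.subst, stratify, h, ih]
  | op K φ ih => simp [Formula.subst, stratify, ih, On_subst]

theorem down_subst (x : ℕ) (u : Term) :
    ∀ χ : LOO, (χ.subst x u).down = χ.down.subst x u := by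
  intro χ
  induction χ with
  | eq t v => rfl
  | imp φ ψ ih1 ih2 => simp [Formula.subst, Formula.down, ih1, ih2]
  | not φ ih => simp [Formula.subst, Formula.down, ih]
  | all y φ ih =>
    by_cases h : y = x <;> simp [Formula.subst, Formula.down, h, ih]
  | op α φ ih => simp [Formula.subst, Formula.down, ih]

theorem On_numSub (s : ℕ → ℕ) : ∀ (χ : LOO) (B : List ℕ), (Formula.numSub s B χ).On = χ.On := by
  intro χ
  induction χ with
  | eq t v => intro B; simp [Formula.numSub, Formula.On]
  | imp φ ψ ih1 ih2 => intro B; simp [Formula.numSub, Formula.On, ih1, ih2]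
  | not φ ih => intro B; simp [Formula.numSub, Formula.On, ih]
  | all y φ ih => intro B; simp [Formula.numSub, Formula.On, ih]
  | op α φ ih => intro B; simp [Formula.numSub, Formula.On, ih]

theorem stratify_numSub (X : Set Ord2) (s : ℕ → ℕ) :
    ∀ (φ : LEA) (B : List ℕ),
      stratify X (Formula.numSub s B φ) = Formula.numSub s B (stratify X φ) := by
  intro φ
  induction φ with
  | eq t v => intro B; rfl
  | imp φ ψ ih1 ih2 => intro B; simp [Formula.numSub, stratify, ih1, ih2]
  | not φ ih => intro B; simp [Formula.numSub, stratify, ih]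
  | all y φ ih => intro B; simp [Formula.numSub, stratify, ih]
  | op K φ ih => intro B; simp [Formula.numSub, stratify, ih, On_numSub]

theorem down_numSub (s : ℕ → ℕ) :
    ∀ (χ : LOO) (B : List ℕ),
      (Formula.numSub s B χ).down = Formula.numSub s B χ.down := by
  intro χ
  induction χ with
  | eq t v => intro B; rfl
  | imp φ ψ ih1 ih2 => intro B; simp [Formula.numSub, Formula.down, ih1, ih2]
  | not φ ih => intro B; simp [Formula.numSub, Formula.down, ih]
  | all y φ ih => intro B; simp [Formula.numSub, Formula.down, ih]
  | op α φ ih => intro B; simp [Formula.numSub, Formula.down, ih]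

theorem substitutable_stratify (X : Set Ord2) (x : ℕ) (u : Term) :
    ∀ φ : LEA, φ.Substitutable x u → (stratify X φ).Substitutable x u := by
  intro φ
  induction φ with
  | eq t v => intro h; trivial
  | imp φ ψ ih1 ih2 => intro h; exact ⟨ih1 h.1, ih2 h.2⟩
  | not φ ih => exact ih
  | all y φ ih =>
    rintro (h | h | ⟨h1, h2⟩)
    · exact Or.inl h
    · exact Or.inr (Or.inl (by rwa [free_stratify]))
    · exact Or.inr (Or.inr ⟨h1, ih h2⟩)
  | op K φ ih => exact ih

theorem substitutable_down (x : ℕ) (u : Term) :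
    ∀ χ : LOO, χ.Substitutable x u → χ.down.Substitutable x u := by
  intro χ
  induction χ with
  | eq t v => intro h; trivial
  | imp φ ψ ih1 ih2 => intro h; exact ⟨ih1 h.1, ih2 h.2⟩
  | not φ ih => exact ih
  | all y φ ih =>
    rintro (h | h | ⟨h1, h2⟩)
    · exact Or.inl h
    · exact Or.inr (Or.inl (by rwa [free_down]))
    · exact Or.inr (Or.inr ⟨h1, ih h2⟩)
  | op α φ ih => exact ih

theorem alpha_down : ∀ (φ ψ : LOO) (ρ : List (ℕ × ℕ)),
    Formula.alpha ρ φ ψ → Formula.alpha ρ φ.down ψ.down := by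
  intro φ
  induction φ with
  | eq t u => intro ψ ρ h; cases ψ <;> exact h
  | imp φ₁ φ₂ ih1 ih2 =>
    intro ψ ρ h
    cases ψ with
    | imp ψ₁ ψ₂ => exact ⟨ih1 ψ₁ ρ h.1, ih2 ψ₂ ρ h.2⟩
    | _ => exact (h : False).elim
  | not φ ih =>
    intro ψ ρ h
    cases ψ with
    | not ψ₀ => exact ih ψ₀ ρ h
    | _ => exact (h : False).elim
  | all y φ ih =>
    intro ψ ρ h
    cases ψ with
    | all z ψ₀ => exact ih ψ₀ ((y, z) :: ρ) h
    | _ => exact (h : False).elim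
  | op α φ ih =>
    intro ψ ρ h
    cases ψ with
    | op β ψ₀ => exact ⟨rfl, ih ψ₀ ρ h.2⟩
    | _ => exact (h : False).elim

theorem stratify_alpha (X : Set Ord2) : ∀ (φ ψ : LEA) (ρ : List (ℕ × ℕ)),
    Formula.alpha ρ φ ψ →
    Formula.alpha ρ (stratify X φ) (stratify X ψ) ∧
      (stratify X φ).On = (stratify X ψ).On := by
  intro φ
  induction φ with
  | eq t u =>
    intro ψ ρ h
    cases ψ with
    | eq t' u' => exact ⟨h, rfl⟩
    | _ => exact (h : False).elim
  | imp φ₁ φ₂ ih1 ih2 =>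
    intro ψ ρ h
    cases ψ with
    | imp ψ₁ ψ₂ =>
      obtain ⟨a1, o1⟩ := ih1 ψ₁ ρ h.1
      obtain ⟨a2, o2⟩ := ih2 ψ₂ ρ h.2
      refine ⟨⟨a1, a2⟩, ?_⟩
      show (stratify X φ₁).On ∪ (stratify X φ₂).On = (stratify X ψ₁).On ∪ (stratify X ψ₂).On
      rw [o1, o2]
    | _ => exact (h : False).elim
  | not φ ih =>
    intro ψ ρ h
    cases ψ with
    | not ψ₀ => exact ih ψ₀ ρ h
    | _ => exact (h : False).elim
  | all y φ ih =>
    intro ψ ρ h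
    cases ψ with
    | all z ψ₀ => exact ih ψ₀ ((y, z) :: ρ) h
    | _ => exact (h : False).elim
  | op K φ ih =>
    intro ψ ρ h
    cases ψ with
    | op K' ψ₀ =>
      obtain ⟨a, o⟩ := ih ψ₀ ρ h.2
      constructor
      · refine ⟨?_, a⟩
        show leastIn (X \ (stratify X φ).On) = leastIn (X \ (stratify X ψ₀).On)
        rw [o]
      · show insert (leastIn (X \ (stratify X φ).On)) (stratify X φ).On =
          insert (leastIn (X \ (stratify X ψ₀).On)) (stratify X ψ₀).On
        rw [o]
    | _ => exact (h : False).elim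

end Syn

section Sem

theorem eval_downStruc (N : PreStruc Unit) (s : ℕ → N.U) :
    ∀ t : Term, Term.eval (downStruc N) s t = Term.eval N s t := by
  intro t
  induction t <;> simp only [Term.eval, *] <;> rfl

theorem eval_upStruc (M : PreStruc Ord2) (f : LEA → LOO) (s : ℕ → M.U) :
    ∀ t : Term, Term.eval (upStruc M f) s t = Term.eval M s t := by
  intro t
  induction t <;> simp only [Term.eval, *] <;> rfl

theorem Sat_downStruc (N : PreStruc Unit) :
    ∀ (χ : LOO) (s : ℕ → N.U), Sat (downStruc N) χ s ↔ Sat N χ.down s := by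
  intro χ
  induction χ with
  | eq t u => intro s; simp [Sat, Formula.down, eval_downStruc]; exact Iff.rfl
  | imp φ ψ ih1 ih2 => intro s; exact imp_congr (ih1 s) (ih2 s)
  | not φ ih => intro s; exact not_congr (ih s)
  | all x φ ih =>
    intro s
    exact forall_congr' fun a => ih (Function.update s x a)
  | op α φ ih => intro s; exact Iff.rfl

theorem Sat_upStruc (M : PreStruc Ord2) (X' : Set Ord2) :
    ∀ (φ : LEA) (s : ℕ → M.U),
      Sat (upStruc M (stratify X')) φ s ↔ Sat M (stratify X' φ) s := by
  intro φ
  induction φ with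
  | eq t u => intro s; simp [Sat, stratify, eval_upStruc]; exact Iff.rfl
  | imp φ ψ ih1 ih2 => intro s; exact imp_congr (ih1 s) (ih2 s)
  | not φ ih => intro s; exact not_congr (ih s)
  | all x φ ih =>
    intro s
    exact forall_congr' fun a => ih (Function.update s x a)
  | op K φ ih => intro s; cases K; exact Iff.rfl

theorem IsStruc_downStruc {N : PreStruc Unit} (hN : IsStruc N) : IsStruc (downStruc N) := by
  obtain ⟨h1, h2, h3⟩ := hN
  refine ⟨fun K χ s t hst => ?_, fun K χ ψ s hav => ?_, fun K χ x y s hsub => ?_⟩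
  · show N.opSat () χ.down s ↔ N.opSat () χ.down t
    exact h1 () χ.down s t fun z hz => hst z ((free_down χ) ▸ hz)
  · show N.opSat () χ.down s ↔ N.opSat () ψ.down s
    exact h2 () χ.down ψ.down s (alpha_down χ ψ [] hav)
  · show N.opSat () ((χ.subst x (.var y)).down) s ↔
      N.opSat () χ.down (Function.update s x (s y))
    rw [down_subst]
    exact h3 () χ.down x y s (substitutable_down x (.var y) χ hsub)

theorem IsStruc_upStruc (X' : Set Ord2) {M : PreStruc Ord2} (hM : IsStruc M) :
    IsStruc (upStruc M (stratify X')) := by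
  obtain ⟨h1, h2, h3⟩ := hM
  refine ⟨fun K φ s t hst => ?_, fun K φ ψ s hav => ?_, fun K φ x y s hsub => ?_⟩
  · show M.opSat (leastIn (X' \ (stratify X' φ).On)) (stratify X' φ) s ↔
      M.opSat (leastIn (X' \ (stratify X' φ).On)) (stratify X' φ) t
    exact h1 _ _ s t fun z hz => hst z ((free_stratify X' φ) ▸ hz)
  · obtain ⟨hal, hOn⟩ := stratify_alpha X' φ ψ [] hav
    show M.opSat (leastIn (X' \ (stratify X' φ).On)) (stratify X' φ) s ↔
      M.opSat (leastIn (X' \ (stratify X' ψ).On)) (stratify X' ψ) s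
    rw [hOn]
    exact h2 _ _ _ s hal
  · show M.opSat (leastIn (X' \ (stratify X' (φ.subst x (.var y))).On))
        (stratify X' (φ.subst x (.var y))) s ↔
      M.opSat (leastIn (X' \ (stratify X' φ).On)) (stratify X' φ)
        (Function.update s x (s y))
    rw [stratify_subst, On_subst]
    exact h3 _ _ x y s (substitutable_stratify X' x (.var y) φ hsub)

end Sem

section Claims

theorem On_stratify_VX : ∀ φ : LEA, (stratify VX φ).On = Seg φ.depth := by
  intro φ
  induction φ with
  | eq t u => simp [stratify, Formula.On, Formula.depth, Seg_zero]
  | imp φ ψ ih1 ih2 => simp [stratify, Formula.On, Formula.depth, ih1, ih2, Seg_union]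
  | not φ ih => simpa [stratify, Formula.On, Formula.depth] using ih
  | all x φ ih => simpa [stratify, Formula.On, Formula.depth] using ih
  | op K φ ih =>
    show insert (leastIn (VX \ (stratify VX φ).On)) (stratify VX φ).On = Seg (φ.depth + 1)
    rw [ih, leastIn_VX, Seg_succ]

theorem stratify_Seg' (d : ℕ) :
    ∀ φ : LEA, φ.depth ≤ d → stratify (Seg' d) φ = stratify VX φ := by
  intro φ
  induction φ with
  | eq t u => intro _; rfl
  | imp φ ψ ih1 ih2 =>
    intro h
    simp only [Formula.depth, max_le_iff] at h
    simp [stratify, ih1 h.1, ih2 h.2]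
  | not φ ih =>
    intro h
    simp only [Formula.depth] at h
    simp [stratify, ih h]
  | all x φ ih =>
    intro h
    simp only [Formula.depth] at h
    simp [stratify, ih h]
  | op K φ ih =>
    intro h
    simp only [Formula.depth] at h
    have hd : φ.depth ≤ d := by omega
    have hlt : φ.depth < d := by omega
    show Formula.op (leastIn (Seg' d \ (stratify (Seg' d) φ).On)) (stratify (Seg' d) φ) =
      Formula.op (leastIn (VX \ (stratify VX φ).On)) (stratify VX φ)
    rw [ih hd, On_stratify_VX φ, leastIn_Seg' hlt, leastIn_VX]

end Claims

section Main

theorem stratify_Seg'_assign (s : ℕ → ℕ) (φ₀ : LEA) :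
    stratify (Seg' φ₀.depth) (assignSub s φ₀) = assignSub s (stratify VX φ₀) := by
  show stratify (Seg' φ₀.depth) (Formula.numSub s [] φ₀) =
    Formula.numSub s [] (stratify VX φ₀)
  rw [stratify_numSub, stratify_Seg' φ₀.depth φ₀ le_rfl]

theorem down_assign (s : ℕ → ℕ) (φ₀ : LEA) :
    (assignSub s (stratify VX φ₀)).down = assignSub s φ₀ := by
  show (Formula.numSub s [] (stratify VX φ₀)).down = Formula.numSub s [] φ₀
  rw [down_numSub, down_stratify]

theorem models_iff (T : Set LEA) (φ₀ : LEA) (s : ℕ → ℕ) :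
    Models T (assignSub s φ₀) ↔
      Models (cut (oplus T) (leastIn (VX \ (stratify VX φ₀).On)))
        (assignSub s (stratify VX φ₀)) := by
  rw [On_stratify_VX, leastIn_VX]
  constructor
  · intro h M hM hMT t
    have hup : IsStruc (upStruc M (stratify (Seg' φ₀.depth))) :=
      IsStruc_upStruc (Seg' φ₀.depth) hM
    have hsatT : ∀ θ ∈ T, ∀ u : ℕ → M.U,
        Sat (upStruc M (stratify (Seg' φ₀.depth))) θ u := by
      intro θ hθ u
      rw [Sat_upStruc]
      apply hMT
      refine ⟨⟨θ, hθ, stratify (Seg' φ₀.depth),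
        ⟨Seg' φ₀.depth, Seg'_infinite φ₀.depth, rfl⟩, rfl⟩, ?_⟩
      intro β hβ
      exact Seg'_lt φ₀.depth β (On_stratify_subset _ (Seg'_infinite φ₀.depth) θ hβ)
    have hc := h (upStruc M (stratify (Seg' φ₀.depth))) hup hsatT t
    rw [Sat_upStruc, stratify_Seg'_assign] at hc
    exact hc
  · intro h N hN hNT t
    have hdn : IsStruc (downStruc N) := IsStruc_downStruc hN
    have hsat : ∀ ψ ∈ cut (oplus T) (omul (φ₀.depth + 1) 0), ∀ u : ℕ → N.U,
        Sat (downStruc N) ψ u := by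
      rintro ψ ⟨⟨θ, hθ, f, ⟨Y, hY, rfl⟩, rfl⟩, -⟩ u
      rw [Sat_downStruc, down_stratify]
      exact hNT θ hθ u
    have hc := h (downStruc N) hdn hsat t
    rw [Sat_downStruc, down_assign] at hc
    exact hc

end Main

theorem eval_NM (T : Set LEA) (T' : Set LOO) (s : ℕ → ℕ) :
    ∀ t : Term, Term.eval (NStruc T) s t = Term.eval (MStruc T') s t := by
  intro t
  induction t <;> simp only [Term.eval, *] <;> rfl

/-- The upward stratification theorem: for the veristratifier `⁺`,
`𝒩_T ⊨ φ[s]` iff `𝓜_{T^⊕} ⊨ φ⁺[s]`. -/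
theorem upward_stratification (T : Set LEA) (hT : IsTheory T)
    (φ : LEA) (s : ℕ → ℕ) :
    Sat (NStruc T) φ s ↔ Sat (MStruc (oplus T)) (veristratifier φ) s := by
  induction φ generalizing s with
  | eq t u =>
    show Term.eval (NStruc T) s t = Term.eval (NStruc T) s u ↔
      Term.eval (MStruc (oplus T)) s t = Term.eval (MStruc (oplus T)) s u
    rw [eval_NM T (oplus T) s t, eval_NM T (oplus T) s u]
    exact Iff.rfl
  | imp φ ψ ih1 ih2 => exact imp_congr (ih1 s) (ih2 s)
  | not φ ih => exact not_congr (ih s)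
  | all x φ ih =>
    show (∀ a : ℕ, Sat (NStruc T) φ (Function.update s x a)) ↔
      ∀ a : ℕ, Sat (MStruc (oplus T)) (veristratifier φ) (Function.update s x a)
    exact forall_congr' fun a => ih (Function.update s x a)
  | op K φ ih =>
    cases K
    exact models_iff T φ s

end FCT
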